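/- Let p ≥ 5 be a prime and let i be an integer with 0 < i < p/3. Then ∑_{k=0}^{p-1} (3k)!/(k!^3) * 27^{-k} * 1/(k+i) ≡ 0 (mod p). -/

import Mathlib

set_option maxRecDepth 8000

open Finset Polynomial

private lemma asc_prod (a : ℕ) : ∀ m : ℕ, a.ascFactorial m = ∏ j ∈ Finset.range m, (a + j)
  | 0 => by simp
  | m + 1 => by rw [Nat.ascFactorial_succ, asc_prod a m, Finset.prod_range_succ, mul_comm]

private lemma fac_eq_choose_mul (k : ℕ) :
    (3 * k).factorial = ((3 * k).choose k * (2 * k).choose k) * k.factorial ^ 3 := by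
  have h1 := Nat.choose_mul_factorial_mul_factorial (show k ≤ 3 * k by omega)
  have h2 := Nat.choose_mul_factorial_mul_factorial (show k ≤ 2 * k by omega)
  rw [show 3 * k - k = 2 * k by omega] at h1
  rw [show 2 * k - k = k by omega] at h2
  rw [← h1, ← h2]; ring

private lemma div_eq_choose (k : ℕ) :
    (3 * k).factorial / k.factorial ^ 3 = (3 * k).choose k * (2 * k).choose k := by
  rw [fac_eq_choose_mul k]
  exact Nat.mul_div_cancel _ (by positivity)

private lemma prod_sub_fac : ∀ k : ℕ, ∏ j ∈ Finset.range k, (k - j) = k.factorial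
  | 0 => by simp
  | k + 1 => by
    rw [Finset.prod_range_succ']
    have : ∀ j ∈ Finset.range k, (k + 1 - (j + 1)) = k - j := fun j _ => by omega
    rw [Finset.prod_congr rfl this, prod_sub_fac k]
    simp [Nat.factorial_succ, mul_comm]

private lemma key_rec (p : ℕ) [Fact p.Prime] (n : ℕ)
    (h0 : ((3 * n + 1 : ℕ) : ZMod p) * ((3 * n + 2 : ℕ) : ZMod p) = 0) :
    ∀ k, k ≤ n → ((3 * k).factorial : ZMod p) * ((n - k).factorial : ZMod p)
      = (-1) ^ k * 27 ^ k * ((n + k).factorial : ZMod p) * (k.factorial : ZMod p) := by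
  intro k
  induction k with
  | zero => simp
  | succ k ih =>
    intro hk
    have hk' : k ≤ n := by omega
    have IH := ih hk'
    have e1 : (3 * (k + 1)).factorial = (3*k+3) * ((3*k+2) * ((3*k+1) * (3*k).factorial)) := by
      rw [show 3 * (k+1) = (3*k+2)+1 by omega, Nat.factorial_succ,
        show 3*k+2 = (3*k+1)+1 by omega, Nat.factorial_succ,
        show 3*k+1 = (3*k)+1 by omega, Nat.factorial_succ]
    have e2 : (n + (k + 1)).factorial = (n+k+1) * (n+k).factorial := by
      rw [show n + (k+1) = (n+k)+1 by omega, Nat.factorial_succ]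
    have e3 : (k + 1).factorial = (k+1) * k.factorial := Nat.factorial_succ k
    have e4 : (n - k).factorial = (n - k) * (n - (k+1)).factorial := by
      rw [show n - k = (n - (k+1)) + 1 by omega, Nat.factorial_succ]
    rw [e4] at IH
    rw [e1, e2, e3]
    push_cast [Nat.cast_sub hk', Nat.cast_sub (show k + 1 ≤ n from hk)] at *
    linear_combination (-27 * (((n:ZMod p)) + k + 1) * ((k:ZMod p)+1)) * IH
      + (3 * ((k:ZMod p)+1) * ((3*k).factorial : ZMod p) * ((n - (k+1) : ℕ).factorial : ZMod p)) * h0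

private lemma trunc_zero (p : ℕ) [Fact p.Prime] (n k : ℕ) (hn : 3 * n + 3 ≥ p) (h1 : n < k) (h2 : k < p) :
    (((3 * k).factorial / k.factorial ^ 3 : ℕ) : ZMod p) = 0 := by
  have hp : p.Prime := Fact.out
  rw [div_eq_choose, ZMod.natCast_eq_zero_iff]
  rcases le_or_gt p (2 * k) with h | h
  · exact ((hp.dvd_choose h2 (by omega) (by omega)) : p ∣ (2*k).choose k).mul_left _
  · exact ((hp.dvd_choose h2 (by omega) (by omega)) : p ∣ (3*k).choose k).mul_right _

theorem stmt_5 (p : ℕ) [Fact p.Prime] (hp5 : 5 ≤ p) (i : ℕ) (hi : 0 < i) (hip : 3 * i < p) :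
    ∑ k ∈ Finset.range p,
      ((((3 * k).factorial / (k.factorial) ^ 3 : ℕ) : ZMod p)
        * ((27 : ZMod p)⁻¹) ^ k * (((k : ZMod p) + i)⁻¹)) = 0 := by
  have hp : p.Prime := Fact.out
  set n : ℕ := (p - 1) / 3 with hn
  have hp3 : p % 3 ≠ 0 := by
    intro h
    rcases Nat.Prime.eq_one_or_self_of_dvd hp 3 (Nat.dvd_of_mod_eq_zero h) with h' | h' <;> omega
  have h3n : 3 * n + 1 = p ∨ 3 * n + 2 = p := by omega
  have hn1 : 1 ≤ n := by omega
  have h2n : 2 * n < p := by omega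
  have hin : i ≤ n := by omega
  have hcast : ∀ m : ℕ, 0 < m → m < p → ((m : ZMod p) ≠ 0) := by
    intro m h1 h2 h
    rw [ZMod.natCast_eq_zero_iff] at h
    have := Nat.le_of_dvd h1 h; omega
  have hfac : ∀ m : ℕ, m < p → ((m.factorial : ZMod p) ≠ 0) := by
    intro m hm h
    rw [ZMod.natCast_eq_zero_iff] at h
    exact absurd ((Nat.Prime.dvd_factorial hp).mp h) (by omega)
  have h27 : (27 : ZMod p) ≠ 0 := by
    intro h
    have h' : ((27 : ℕ) : ZMod p) = 0 := by exact_mod_cast h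
    rw [ZMod.natCast_eq_zero_iff] at h'
    have h3 : p ∣ 3 ^ 3 := by norm_num; exact h'
    have := Nat.le_of_dvd (by norm_num) (hp.dvd_of_dvd_pow h3)
    omega
  have h0 : ((3 * n + 1 : ℕ) : ZMod p) * ((3 * n + 2 : ℕ) : ZMod p) = 0 := by
    rcases h3n with h | h
    · rw [h, ZMod.natCast_self, zero_mul]
    · rw [h, ZMod.natCast_self, mul_zero]
  have key := key_rec p n h0
  have hsub : range (n + 1) ⊆ range p := fun x hx => by
    simp only [mem_range] at *; omega
  rw [← Finset.sum_subset hsub (fun k hk1 hk2 => by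
    simp only [mem_range] at hk1 hk2
    rw [trunc_zero p n k (by omega) (by omega) hk1, zero_mul, zero_mul])]
  -- Lagrange interpolation setup
  set v : ℕ → ZMod p := fun k => -(k : ZMod p) with hv
  have hvs : Set.InjOn v (range (n+1)) := by
    intro a ha b hb h
    simp only [coe_range, Set.mem_Iio] at ha hb
    have h' : ((a : ℕ) : ZMod p) = b := by simpa [hv] using h
    have h2 : a % p = b % p := (ZMod.natCast_eq_natCast_iff a b p).mp h'
    rwa [Nat.mod_eq_of_lt (by omega), Nat.mod_eq_of_lt (by omega)] at h2
  set f : Polynomial (ZMod p) := ∏ j ∈ range n, (X - C ((j : ZMod p) + 1)) with hf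
  have hdeg : f.degree < (range (n+1)).card := by
    rw [card_range]
    have hd : f.degree = (n : WithBot ℕ) := by
      rw [hf, degree_prod]
      have h1 : ∑ j ∈ range n, (X - C ((j : ZMod p) + 1)).degree = ∑ _j ∈ range n, 1 :=
        Finset.sum_congr rfl fun j _ => degree_X_sub_C _
      rw [h1]
      simp [Finset.sum_const]
    rw [hd]
    exact_mod_cast Nat.lt_succ_self n
  have hL := Lagrange.eq_interpolate hvs hdeg
  have hEval := congrArg (Polynomial.eval ((i : ZMod p))) hL
  rw [Lagrange.interpolate_apply, Polynomial.eval_finset_sum] at hEval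
  have hfi : f.eval ((i : ZMod p)) = 0 := by
    rw [hf, eval_prod]
    apply Finset.prod_eq_zero (show i - 1 ∈ range n by simp; omega)
    have : (((i - 1 : ℕ)) : ZMod p) = (i : ZMod p) - 1 := by
      push_cast [Nat.cast_sub hi]; ring
    simp [this]
  have hsum : ∑ k ∈ range (n+1), f.eval (v k) * (Lagrange.basis (range (n+1)) v k).eval (i : ZMod p) = 0 := by
    have h1 : ∑ k ∈ range (n+1), eval (i:ZMod p) (C (eval (v k) f) * Lagrange.basis (range (n+1)) v k)
        = ∑ k ∈ range (n+1), f.eval (v k) * (Lagrange.basis (range (n+1)) v k).eval (i:ZMod p) :=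
      Finset.sum_congr rfl fun k _ => by rw [eval_mul, eval_C]
    rw [← h1, ← hEval, hfi]
  have hbasis : ∀ k, k ≤ n → (Lagrange.basis (range (n+1)) v k).eval (i : ZMod p)
      = ((-1)^k * (k.factorial : ZMod p) * ((n-k).factorial : ZMod p))⁻¹
        * (((i : ZMod p) + k)⁻¹ * ((i.ascFactorial (n+1) : ℕ) : ZMod p)) := by
    intro k hk
    have hP : ∏ j ∈ (range (n+1)).erase k, ((j : ZMod p) - (k : ZMod p))
        = (-1)^k * (k.factorial : ZMod p) * ((n-k).factorial : ZMod p) := by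
      have hsplit : (range (n+1)).erase k = range k ∪ Ico (k+1) (n+1) := by
        ext j; simp only [mem_erase, mem_range, mem_union, mem_Ico]; omega
      have hdisj : Disjoint (range k) (Ico (k+1) (n+1)) := by
        simp only [Finset.disjoint_left, mem_range, mem_Ico]; intro j hj; omega
      rw [hsplit, Finset.prod_union hdisj]
      have e1 : ∀ j ∈ range k, ((j : ZMod p) - (k : ZMod p)) = (-1) * (((k - j : ℕ)) : ZMod p) := by
        intro j hj
        simp only [mem_range] at hj
        push_cast [Nat.cast_sub hj.le]; ring
      have e2 : ∀ x ∈ range (n+1-(k+1)), (((k+1+x : ℕ) : ZMod p) - (k : ZMod p)) = ((x+1 : ℕ) : ZMod p) := by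
        intro x _; push_cast; ring
      rw [Finset.prod_congr rfl e1, Finset.prod_Ico_eq_prod_range, Finset.prod_congr rfl e2]
      simp only [Finset.prod_mul_distrib, Finset.prod_const, card_range]
      rw [← Nat.cast_prod, ← Nat.cast_prod, prod_sub_fac, Finset.prod_range_add_one_eq_factorial,
        show n+1-(k+1) = n-k by omega]
    have hQ : ∏ j ∈ (range (n+1)).erase k, ((i : ZMod p) + (j : ZMod p))
        = ((i : ZMod p) + k)⁻¹ * ((i.ascFactorial (n+1) : ℕ) : ZMod p) := by
      have hmem : k ∈ range (n+1) := by simp only [mem_range]; omega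
      have h3 := Finset.mul_prod_erase (range (n+1)) (fun j => ((i : ZMod p) + (j : ZMod p))) hmem
      have h4 : ∏ j ∈ range (n+1), ((i : ZMod p) + (j : ZMod p)) = ((i.ascFactorial (n+1) : ℕ) : ZMod p) := by
        rw [asc_prod, Nat.cast_prod]
        exact Finset.prod_congr rfl fun j _ => by push_cast; ring
      have hne : ((i : ZMod p) + (k : ZMod p)) ≠ 0 := by
        have := hcast (i + k) (by omega) (by omega)
        push_cast at this; exact this
      rw [← h4, ← h3, inv_mul_cancel_left₀ hne]
    rw [Lagrange.basis, eval_prod]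
    have h2 : ∀ j ∈ (range (n+1)).erase k, (Lagrange.basisDivisor (v k) (v j)).eval (i : ZMod p)
        = ((j : ZMod p) - (k : ZMod p))⁻¹ * ((i : ZMod p) + (j : ZMod p)) := by
      intro j _
      rw [Lagrange.basisDivisor]
      simp only [eval_mul, eval_C, eval_sub, eval_X, hv]
      ring_nf
    rw [Finset.prod_congr rfl h2, Finset.prod_mul_distrib, Finset.prod_inv_distrib, hP, hQ]
  have hevalv : ∀ k : ℕ, f.eval (v k) = (-1)^n * (((k+1).ascFactorial n : ℕ) : ZMod p) := by
    intro k
    rw [hf, eval_prod]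
    have h5 : ∀ j ∈ range n, (X - C ((j : ZMod p)+1)).eval (v k) = (-1) * (((k+1+j : ℕ)) : ZMod p) := by
      intro j _
      simp only [eval_sub, eval_X, eval_C, hv]
      push_cast; ring
    rw [Finset.prod_congr rfl h5]
    simp only [Finset.prod_mul_distrib, Finset.prod_const, card_range]
    rw [← Nat.cast_prod, ← asc_prod]
  set c : ZMod p := (-1)^n * ((i.ascFactorial (n+1) : ℕ) : ZMod p) with hc
  have hcne : c ≠ 0 := by
    apply mul_ne_zero (pow_ne_zero _ (neg_ne_zero.mpr one_ne_zero))
    intro h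
    rw [ZMod.natCast_eq_zero_iff] at h
    have hmul : (i-1).factorial * i.ascFactorial (n+1) = (i + n).factorial := by
      have h6 := Nat.factorial_mul_ascFactorial (i-1) (n+1)
      rw [show i - 1 + 1 = i by omega, show i - 1 + (n+1) = i + n by omega] at h6
      exact h6
    have h7 : p ∣ (i+n).factorial := hmul ▸ (h.mul_left _)
    exact absurd ((Nat.Prime.dvd_factorial hp).mp h7) (by omega)
  have hterm : ∀ k ∈ range (n+1),
      c * ((((3 * k).factorial / (k.factorial) ^ 3 : ℕ) : ZMod p)
        * ((27 : ZMod p)⁻¹) ^ k * (((k : ZMod p) + i)⁻¹))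
      = f.eval (v k) * (Lagrange.basis (range (n+1)) v k).eval (i : ZMod p) := by
    intro k hk
    simp only [mem_range] at hk
    have hk' : k ≤ n := by omega
    rw [hbasis k hk', hevalv k, div_eq_choose k, Nat.cast_mul]
    have hb : ((3*k).choose k : ZMod p) * ((2*k).choose k : ZMod p) * ((k.factorial : ZMod p))^3
        = ((3*k).factorial : ZMod p) := by
      exact_mod_cast congrArg (fun m : ℕ => (m : ZMod p)) (fac_eq_choose_mul k) |>.symm
    have hA : (k.factorial : ZMod p) * (((k+1).ascFactorial n : ℕ) : ZMod p) = ((n+k).factorial : ZMod p) := by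
      have h8 := Nat.factorial_mul_ascFactorial k n
      rw [show k + n = n + k by omega] at h8
      exact_mod_cast congrArg (fun m : ℕ => (m : ZMod p)) h8
    have hkey := key k hk'
    have hkf := hfac k (by omega)
    have hnkf := hfac (n-k) (by omega)
    have hnk2 := hfac (n+k) (by omega)
    have hik : ((k : ZMod p) + (i : ZMod p)) ≠ 0 := by
      have := hcast (k+i) (by omega) (by omega)
      push_cast at this; exact this
    have hik' : ((i : ZMod p) + (k : ZMod p)) ≠ 0 := by rwa [add_comm] at hik
    have hm1 : ((-1 : ZMod p))^k ≠ 0 := pow_ne_zero _ (neg_ne_zero.mpr one_ne_zero)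
    rw [hc]
    have hs2 : ((-1 : ZMod p)^k)^2 = 1 := by
      rw [← pow_mul, mul_comm, pow_mul, neg_one_sq, one_pow]
    have hWW : ((k.factorial : ZMod p))^2 ≠ 0 := pow_ne_zero _ hkf
    have hcore : ((3*k).choose k : ZMod p) * ((2*k).choose k : ZMod p) * (-1:ZMod p)^k
        * (k.factorial : ZMod p) * ((n-k).factorial : ZMod p)
        = (27:ZMod p)^k * (((k+1).ascFactorial n : ℕ) : ZMod p) := by
      apply mul_left_cancel₀ hWW
      linear_combination ((-1:ZMod p)^k * ((n-k).factorial : ZMod p)) * hb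
        + ((-1:ZMod p)^k) * hkey
        + ((27:ZMod p)^k * ((n+k).factorial : ZMod p) * (k.factorial : ZMod p)) * hs2
        - ((27:ZMod p)^k * (k.factorial : ZMod p)) * hA
    have hB : (((k+1).ascFactorial n : ℕ) : ZMod p) = ((27:ZMod p)^k)⁻¹ *
        (((3*k).choose k : ZMod p) * ((2*k).choose k : ZMod p) * (-1:ZMod p)^k
        * (k.factorial : ZMod p) * ((n-k).factorial : ZMod p)) := by
      rw [hcore, inv_mul_cancel_left₀ (pow_ne_zero _ h27)]
    rw [hB, add_comm (k : ZMod p) (i : ZMod p)]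
    field_simp
    rw [one_div, inv_pow, mul_assoc, inv_mul_cancel₀ (pow_ne_zero _ h27), mul_one]
  have hfin : c * ∑ k ∈ range (n+1),
      ((((3 * k).factorial / (k.factorial) ^ 3 : ℕ) : ZMod p)
        * ((27 : ZMod p)⁻¹) ^ k * (((k : ZMod p) + i)⁻¹)) = 0 := by
    rw [Finset.mul_sum, Finset.sum_congr rfl hterm]
    exact hsum
  rcases mul_eq_zero.mp hfin with h | h
  · exact absurd h hcne
  · exact h
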